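/- Assume (A1), (A2) and (A3). Then μ is reducible if and only if p_{i,j} + p_{i,j⁺} = p_{i⁺,j⁺} for every (i,j) ∈ 𝒮₂. -/

import Mathlib

open scoped Classical ENNReal
open Filter MeasureTheory

noncomputable section

namespace MTM

/-- the edge relation of the directed graph `𝒢`: `(i,j) ∈ G₂ ↔ p i j > 0`. -/
def edge (p : ℕ → ℕ → ℝ) (i j : ℕ) : Prop := 0 < p i j

/-- product of transition weights along a word. -/
def pword (p : ℕ → ℕ → ℝ) : List ℕ → ℝ
  | [] => 1
  | [_] => 1
  | a :: b :: t => p a b * pword p (b :: t)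

/-- product of contraction ratios along a word. -/
def sword (sr : ℕ → ℕ → ℝ) : List ℕ → ℝ
  | [] => 1
  | [_] => 1
  | a :: b :: t => sr a b * sword sr (b :: t)

/-- `𝒯(σ)`: all lifts of a word, each letter `i` may be replaced by `i + N`. -/
def lifts (N : ℕ) : List ℕ → Finset (List ℕ)
  | [] => {[]}
  | i :: t => (lifts N t).biUnion fun l => {i :: l, (i + N) :: l}

/-- `Γ(σ) = G_n ∩ 𝒯(σ)`. -/
def Gam (p : ℕ → ℕ → ℝ) (N : ℕ) (σ : List ℕ) : Finset (List ℕ) :=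
  (lifts N σ).filter fun τ => τ.Chain' (edge p)

/-- words over the alphabet `Ψ = {1,…,N}`. -/
def isPsiWord (N : ℕ) (σ : List ℕ) : Prop :=
  σ ≠ [] ∧ ∀ x ∈ σ, x ∈ Finset.Icc 1 N

/-- `σ ∈ 𝒮_*`: a `Ψ`-word having at least one admissible lift. -/
def isSword (p : ℕ → ℕ → ℝ) (N : ℕ) (σ : List ℕ) : Prop :=
  isPsiWord N σ ∧ (Gam p N σ).Nonempty

/-- `σ ∈ G_*`: admissible words over `Ω = {1,…,2N}`. -/
def isGword (p : ℕ → ℕ → ℝ) (N : ℕ) (σ : List ℕ) : Prop :=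
  σ ≠ [] ∧ (∀ x ∈ σ, x ∈ Finset.Icc 1 (2 * N)) ∧ σ.Chain' (edge p)

/-- `σ ∈ H₁^*`: admissible words with all letters in `Ψ`. -/
def isH1word (p : ℕ → ℕ → ℝ) (N : ℕ) (σ : List ℕ) : Prop :=
  σ ≠ [] ∧ (∀ x ∈ σ, x ∈ Finset.Icc 1 N) ∧ σ.Chain' (edge p)

/-- `σ ∈ H₂^*`: admissible words with all letters in `Υ = {N+1,…,2N}`. -/
def isH2word (p : ℕ → ℕ → ℝ) (N : ℕ) (σ : List ℕ) : Prop :=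
  σ ≠ [] ∧ (∀ x ∈ σ, x ∈ Finset.Icc (N + 1) (2 * N)) ∧ σ.Chain' (edge p)

/-- `μ(J_σ) = Σ_{σ̃ ∈ Γ(σ)} χ_{σ̃₁} p_{σ̃}`. -/
def muJ (p : ℕ → ℕ → ℝ) (χ : ℕ → ℝ) (N : ℕ) (σ : List ℕ) : ℝ :=
  ∑ τ ∈ Gam p N σ, χ (τ.headD 0) * pword p τ

/-- `ℰ_r(σ) = μ(J_σ) s_σ^r`, with `ℰ_r(θ) = 1` for the empty word. -/
def Er (p : ℕ → ℕ → ℝ) (χ : ℕ → ℝ) (sr : ℕ → ℕ → ℝ) (N : ℕ) (r : ℝ) (σ : List ℕ) : ℝ :=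
  if σ = [] then 1 else muJ p χ N σ * sword sr σ ^ r

/-- `I_{1,σ}` resp. `I_{2,σ}`: the part of `μ(J_σ)` coming from lifts ending with `i`
(resp. with `i⁺`, when applied with `i + N`). -/
def Ipart (p : ℕ → ℕ → ℝ) (χ : ℕ → ℝ) (N : ℕ) (i : ℕ) (σ : List ℕ) : ℝ :=
  ∑ τ ∈ (Gam p N σ).filter (fun τ => τ.getLastD 0 = i), χ (τ.headD 0) * pword p τ

/-- all words of a given length over a finite alphabet. -/
def wordsOfLen (S : Finset ℕ) : ℕ → Finset (List ℕ)
  | 0 => {[]}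
  | n + 1 => (wordsOfLen S n).biUnion fun l => S.image fun a => a :: l

/-- `𝒮_n` as a finite set of words. -/
def Sn (p : ℕ → ℕ → ℝ) (N n : ℕ) : Finset (List ℕ) :=
  (wordsOfLen (Finset.Icc 1 N) n).filter (isSword p N)

/-- irreducibility of the sub-matrix of `p` indexed by `S`: the corresponding directed
graph is strongly connected. -/
def irreducibleOn (p : ℕ → ℕ → ℝ) (S : Finset ℕ) : Prop :=
  ∀ i ∈ S, ∀ j ∈ S, ∃ c : List ℕ, (∀ x ∈ c, x ∈ S) ∧ List.Chain (edge p) i (c ++ [j])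

/-- Assumption (A1): `P₁, P₂` irreducible and `P₄ = 0`. -/
def A1 (p : ℕ → ℕ → ℝ) (N : ℕ) : Prop :=
  irreducibleOn p (Finset.Icc 1 N) ∧
    irreducibleOn (fun a b => p (a + N) (b + N)) (Finset.Icc 1 N) ∧
    ∀ i ∈ Finset.Icc 1 N, ∀ j ∈ Finset.Icc 1 N, p (i + N) j = 0

/-- Assumption (A2). -/
def A2 (p : ℕ → ℕ → ℝ) (N : ℕ) : Prop :=
  ∀ i ∈ Finset.Icc 1 N,
    2 ≤ ((Finset.Icc 1 N).filter fun j => 0 < p i j).card ∧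
      2 ≤ ((Finset.Icc 1 N).filter fun j => 0 < p (i + N) (j + N)).card

/-- Assumption (A3): `ℳ_{i,j} = ∅` or `ℳ_{i,j} = {(i,j),(i,j⁺),(i⁺,j⁺)}`. -/
def A3 (p : ℕ → ℕ → ℝ) (N : ℕ) : Prop :=
  ∀ i ∈ Finset.Icc 1 N, ∀ j ∈ Finset.Icc 1 N,
    (p i j = 0 ∧ p i (j + N) = 0 ∧ p (i + N) j = 0 ∧ p (i + N) (j + N) = 0) ∨
      (0 < p i j ∧ 0 < p i (j + N) ∧ p (i + N) j = 0 ∧ 0 < p (i + N) (j + N))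

/-- Assumption (A4): `ℳ_{i,j} = ∅` or `ℳ_{i,j} = 𝒩_{i,j}`. -/
def A4 (p : ℕ → ℕ → ℝ) (N : ℕ) : Prop :=
  ∀ i ∈ Finset.Icc 1 N, ∀ j ∈ Finset.Icc 1 N,
    (p i j = 0 ∧ p i (j + N) = 0 ∧ p (i + N) j = 0 ∧ p (i + N) (j + N) = 0) ∨
      (0 < p i j ∧ 0 < p i (j + N) ∧ 0 < p (i + N) j ∧ 0 < p (i + N) (j + N))

/-- Assumption (A5): `P₁` is irreducible. -/
def A5 (p : ℕ → ℕ → ℝ) (N : ℕ) : Prop := irreducibleOn p (Finset.Icc 1 N)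

/-- `T_σ = T_{σ₁σ₂} ∘ ⋯ ∘ T_{σ_{n-1}σ_n}` (identity for words of length `≤ 1`). -/
def Tword {E : Type*} (T : ℕ → ℕ → E → E) : List ℕ → E → E
  | [], x => x
  | [_], x => x
  | a :: b :: t, x => T a b (Tword T (b :: t) x)

/-- the cylinder set `J_σ = T_σ (J_{σ_n})`. -/
def Jword {E : Type*} (T : ℕ → ℕ → E → E) (J : ℕ → Set E) (σ : List ℕ) : Set E :=
  Tword T σ '' J (σ.getLastD 0)

/-- the Mauldin–Williams fractal `K = ⋂_k ⋃_{σ ∈ G_k} J_σ`. -/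
def attractor {E : Type*} (p : ℕ → ℕ → ℝ) (N : ℕ) (T : ℕ → ℕ → E → E) (J : ℕ → Set E) :
    Set E :=
  ⋂ n : ℕ, ⋃ σ ∈ {σ : List ℕ | isGword p N σ ∧ σ.length = n + 1}, Jword T J σ

/-- `μ` is reducible: `μ = ν₁ ∘ π₁⁻¹` for the Markov-type measure `ν₁` associated with some
`N × N` row-stochastic matrix and positive probability vector; equivalently, the cylinder
values of `μ` are of Markov type. -/
def reducible {E : Type*} [MeasurableSpace E] (p : ℕ → ℕ → ℝ) (N : ℕ)
    (T : ℕ → ℕ → E → E) (J : ℕ → Set E) (μ : Measure E) : Prop :=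
  ∃ (pt : ℕ → ℕ → ℝ) (χt : ℕ → ℝ),
    (∀ i ∈ Finset.Icc 1 N, ∀ j ∈ Finset.Icc 1 N, 0 ≤ pt i j) ∧
      (∀ i ∈ Finset.Icc 1 N, ∑ j ∈ Finset.Icc 1 N, pt i j = 1) ∧
      (∀ i ∈ Finset.Icc 1 N, 0 < χt i) ∧
      (∑ i ∈ Finset.Icc 1 N, χt i = 1) ∧
      ∀ σ : List ℕ, isSword p N σ →
        μ (Jword T J σ) = ENNReal.ofReal (χt (σ.headD 0) * pword pt σ)

/-- `e^r_{k,r}(μ)`: the `k`-th quantization error of order `r`, to the `r`-th power. -/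
def quantErr {E : Type*} [PseudoMetricSpace E] [MeasurableSpace E] (r : ℝ) (μ : Measure E)
    (k : ℕ) : ℝ :=
  sInf ((fun α : Set E => ∫ x, Metric.infDist x α ^ r ∂μ) ''
    {α : Set E | α.Nonempty ∧ α.Finite ∧ α.ncard ≤ k})

/-- the upper quantization coefficient `Q̄_r^s(μ) = limsup_k k^{r/s} e^r_{k,r}(μ)`. -/
def upperQC {E : Type*} [PseudoMetricSpace E] [MeasurableSpace E] (r s : ℝ)
    (μ : Measure E) : ℝ≥0∞ :=
  limsup (fun k : ℕ => ENNReal.ofReal ((k : ℝ) ^ (r / s) * quantErr r μ k)) atTop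

/-- the lower quantization coefficient `Q̲_r^s(μ)`. -/
def lowerQC {E : Type*} [PseudoMetricSpace E] [MeasurableSpace E] (r s : ℝ)
    (μ : Measure E) : ℝ≥0∞ :=
  liminf (fun k : ℕ => ENNReal.ofReal ((k : ℝ) ^ (r / s) * quantErr r μ k)) atTop

/-- the upper quantization dimension `D̄_r(μ) = limsup_k log k / (-log e_{k,r}(μ))`. -/
def upperQD {E : Type*} [PseudoMetricSpace E] [MeasurableSpace E] (r : ℝ)
    (μ : Measure E) : ℝ :=
  limsup (fun k : ℕ => Real.log k / (-Real.log (quantErr r μ k ^ (1 / r)))) atTop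

/-- the lower quantization dimension `D̲_r(μ)`. -/
def lowerQD {E : Type*} [PseudoMetricSpace E] [MeasurableSpace E] (r : ℝ)
    (μ : Measure E) : ℝ :=
  liminf (fun k : ℕ => Real.log k / (-Real.log (quantErr r μ k ^ (1 / r)))) atTop

/-- spectral radius of a real matrix: the largest modulus of a complex eigenvalue. -/
def specRad {n : Type*} [Fintype n] [DecidableEq n] (M : Matrix n n ℝ) : ℝ :=
  sSup (norm '' spectrum ℂ (M.map (algebraMap ℝ ℂ)))

/-- `A₁(s) = ((p_{i,j} s_{i,j}^r)^s)_{i,j=1}^N`. -/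
def matA1 (p sr : ℕ → ℕ → ℝ) (N : ℕ) (r s : ℝ) : Matrix (Fin N) (Fin N) ℝ :=
  Matrix.of fun i j => (p (i.1 + 1) (j.1 + 1) * sr (i.1 + 1) (j.1 + 1) ^ r) ^ s

/-- `A₂(s) = ((p_{i⁺,j⁺} s_{i⁺,j⁺}^r)^s)_{i,j=1}^N`. -/
def matA2 (p sr : ℕ → ℕ → ℝ) (N : ℕ) (r s : ℝ) : Matrix (Fin N) (Fin N) ℝ :=
  Matrix.of fun i j => (p (i.1 + 1 + N) (j.1 + 1 + N) * sr (i.1 + 1 + N) (j.1 + 1 + N) ^ r) ^ s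

/-- `A₃(s) = ((p_{i,j⁺} s_{i,j⁺}^r)^s)_{i,j=1}^N`. -/
def matA3 (p sr : ℕ → ℕ → ℝ) (N : ℕ) (r s : ℝ) : Matrix (Fin N) (Fin N) ℝ :=
  Matrix.of fun i j => (p (i.1 + 1) (j.1 + 1 + N) * sr (i.1 + 1) (j.1 + 1 + N) ^ r) ^ s

/-- `A₄(s) = ((p_{i⁺,j} s_{i⁺,j}^r)^s)_{i,j=1}^N`. -/
def matA4 (p sr : ℕ → ℕ → ℝ) (N : ℕ) (r s : ℝ) : Matrix (Fin N) (Fin N) ℝ :=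
  Matrix.of fun i j => (p (i.1 + 1 + N) (j.1 + 1) * sr (i.1 + 1 + N) (j.1 + 1) ^ r) ^ s

/-- the block matrix `A(s) = [[A₁(s), A₃(s)], [A₄(s), A₂(s)]]`. -/
def matA (p sr : ℕ → ℕ → ℝ) (N : ℕ) (r s : ℝ) :
    Matrix (Fin N ⊕ Fin N) (Fin N ⊕ Fin N) ℝ :=
  Matrix.fromBlocks (matA1 p sr N r s) (matA3 p sr N r s) (matA4 p sr N r s) (matA2 p sr N r s)

/-- `p̲ = min_{(i,j) ∈ G₂} p_{i,j}`. -/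
def pMin (p : ℕ → ℕ → ℝ) (N : ℕ) : ℝ :=
  sInf {x | ∃ i ∈ Finset.Icc 1 (2 * N), ∃ j ∈ Finset.Icc 1 (2 * N), 0 < p i j ∧ x = p i j}

/-- `p̄ = max_{(i,j) ∈ G₂} p_{i,j}`. -/
def pMax (p : ℕ → ℕ → ℝ) (N : ℕ) : ℝ :=
  sSup {x | ∃ i ∈ Finset.Icc 1 (2 * N), ∃ j ∈ Finset.Icc 1 (2 * N), 0 < p i j ∧ x = p i j}

/-- `s̲ = min_{(i,j) ∈ 𝒮₂} s_{i,j}`. -/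
def sMin (p sr : ℕ → ℕ → ℝ) (N : ℕ) : ℝ :=
  sInf {x | ∃ i ∈ Finset.Icc 1 N, ∃ j ∈ Finset.Icc 1 N, isSword p N [i, j] ∧ x = sr i j}

/-- `s̄ = max_{(i,j) ∈ 𝒮₂} s_{i,j}`. -/
def sMax (p sr : ℕ → ℕ → ℝ) (N : ℕ) : ℝ :=
  sSup {x | ∃ i ∈ Finset.Icc 1 N, ∃ j ∈ Finset.Icc 1 N, isSword p N [i, j] ∧ x = sr i j}

/-- `χ̲ = min_{1 ≤ i ≤ 2N} χ_i`. -/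
def chiMin (χ : ℕ → ℝ) (N : ℕ) : ℝ := sInf {x | ∃ i ∈ Finset.Icc 1 (2 * N), x = χ i}

/-- `χ̄ = max_{1 ≤ i ≤ 2N} χ_i`. -/
def chiMax (χ : ℕ → ℝ) (N : ℕ) : ℝ := sSup {x | ∃ i ∈ Finset.Icc 1 (2 * N), x = χ i}

/-- `t` satisfies the defining property of `t_r`:
`(1/n) log Σ_{σ ∈ 𝒮_n} ℰ_r(σ)^{t/(t+r)} → 0`. -/
def trCond (p : ℕ → ℕ → ℝ) (χ : ℕ → ℝ) (sr : ℕ → ℕ → ℝ) (N : ℕ) (r t : ℝ) : Prop :=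
  0 < t ∧
    Tendsto (fun n : ℕ => (n : ℝ)⁻¹ *
      Real.log (∑ σ ∈ Sn p N n, Er p χ sr N r σ ^ (t / (t + r)))) atTop (nhds 0)

/-- the initial word of length `n` of an infinite sequence. -/
def seqTake (x : ℕ → ℕ) (n : ℕ) : List ℕ := (List.range n).map x

/-- `Γ` is a finite maximal antichain among the words satisfying `W`, with respect to the
infinite sequences satisfying `Wseq`. -/
def isMaxAntichain (W : List ℕ → Prop) (Wseq : (ℕ → ℕ) → Prop) (Γ : Finset (List ℕ)) : Prop :=
  (∀ σ ∈ Γ, W σ) ∧ (∀ σ ∈ Γ, ∀ τ ∈ Γ, σ ≠ τ → ¬σ <+: τ) ∧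
    ∀ x : ℕ → ℕ, Wseq x → ∃ n : ℕ, 1 ≤ n ∧ seqTake x n ∈ Γ

/-- infinite admissible sequences with letters in `Ψ`. -/
def isH1seq (p : ℕ → ℕ → ℝ) (N : ℕ) (x : ℕ → ℕ) : Prop :=
  (∀ n, x n ∈ Finset.Icc 1 N) ∧ ∀ n, 0 < p (x n) (x (n + 1))

/-- infinite admissible sequences with letters in `Υ`. -/
def isH2seq (p : ℕ → ℕ → ℝ) (N : ℕ) (x : ℕ → ℕ) : Prop :=
  (∀ n, x n ∈ Finset.Icc (N + 1) (2 * N)) ∧ ∀ n, 0 < p (x n) (x (n + 1))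

/-- minimal length of a word in `Γ`. -/
def minLen (Γ : Finset (List ℕ)) : ℕ := sInf {n | ∃ σ ∈ Γ, σ.length = n}

/-- maximal length of a word in `Γ`. -/
def maxLen (Γ : Finset (List ℕ)) : ℕ := sSup {n | ∃ σ ∈ Γ, σ.length = n}

/-- `Λ_{k,r} = {σ ∈ 𝒮^* : ℰ_r(σ) < c₁^k ≤ ℰ_r(σ^♭)}`. -/
def LamSet (p : ℕ → ℕ → ℝ) (χ : ℕ → ℝ) (sr : ℕ → ℕ → ℝ) (N : ℕ) (r c1 : ℝ) (k : ℕ) :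
    Set (List ℕ) :=
  {σ | isSword p N σ ∧ Er p χ sr N r σ < c1 ^ k ∧ c1 ^ k ≤ Er p χ sr N r σ.dropLast}

/-- `ℒ(σ) = {σ, σ⁺} ∪ {σ|_h ∗ (σ_{h+1}⁺, …, σ_n⁺) : 1 ≤ h ≤ n − 1}`. -/
def Lset (N : ℕ) (σ : List ℕ) : Finset (List ℕ) :=
  (Finset.range (σ.length + 1)).image fun h =>
    σ.take h ++ (σ.drop h).map (fun x => x + N)

section Aux

lemma mem_lifts_cons {N i : ℕ} {σ τ : List ℕ} :
    τ ∈ lifts N (i :: σ) ↔ ∃ l ∈ lifts N σ, τ = i :: l ∨ τ = (i + N) :: l := by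
  simp [lifts]

lemma self_mem_lifts (N : ℕ) : ∀ σ : List ℕ, σ ∈ lifts N σ
  | [] => by simp [lifts]
  | i :: t => mem_lifts_cons.2 ⟨t, self_mem_lifts N t, Or.inl rfl⟩

lemma lifts_ne_nil {N : ℕ} {σ τ : List ℕ} (hσ : σ ≠ []) (h : τ ∈ lifts N σ) : τ ≠ [] := by
  cases σ with
  | nil => exact absurd rfl hσ
  | cons i t => rcases mem_lifts_cons.1 h with ⟨l, _, rfl | rfl⟩ <;> simp

lemma mem_Gam {p : ℕ → ℕ → ℝ} {N : ℕ} {σ τ : List ℕ} :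
    τ ∈ Gam p N σ ↔ τ ∈ lifts N σ ∧ τ.Chain' (edge p) := by
  simp [Gam]

lemma headD_of_mem_Gam {p : ℕ → ℕ → ℝ} {N i : ℕ} {σ τ : List ℕ} (h : τ ∈ Gam p N (i :: σ)) :
    τ.headD 0 = i ∨ τ.headD 0 = i + N := by
  rcases mem_lifts_cons.1 (mem_Gam.1 h).1 with ⟨l, _, rfl | rfl⟩ <;> simp

lemma chain'_cons_ne {R : ℕ → ℕ → Prop} {x : ℕ} {l : List ℕ} (h : l ≠ []) :
    List.Chain' R (x :: l) ↔ R x (l.headD 0) ∧ List.Chain' R l := by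
  cases l with
  | nil => exact absurd rfl h
  | cons b t => exact List.isChain_cons_cons

lemma pword_cons {p : ℕ → ℕ → ℝ} {a : ℕ} {l : List ℕ} (h : l ≠ []) :
    pword p (a :: l) = p a (l.headD 0) * pword p l := by
  cases l with
  | nil => exact absurd rfl h
  | cons b t => rfl

lemma pword_pos {p : ℕ → ℕ → ℝ} : ∀ {τ : List ℕ}, τ.Chain' (edge p) → 0 < pword p τ
  | [], _ => by norm_num [pword]
  | [a], _ => by norm_num [pword]
  | a :: b :: t, hc => by
    replace hc := List.isChain_cons_cons.1 hc
    have := pword_pos hc.2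
    have h1 : (0:ℝ) < p a b := hc.1
    calc (0:ℝ) < p a b * pword p (b :: t) := mul_pos h1 this
    _ = pword p (a :: b :: t) := rfl

/-- the part of the `Γ(σ)`-sum coming from lifts with head `a`. -/
def hsum (p : ℕ → ℕ → ℝ) (N : ℕ) (a : ℕ) (σ : List ℕ) : ℝ :=
  ∑ τ ∈ (Gam p N σ).filter (fun τ => τ.headD 0 = a), pword p τ

lemma Gam_singleton {p : ℕ → ℕ → ℝ} {N j : ℕ} : Gam p N [j] = {[j], [j + N]} := by
  ext τ
  simp only [Gam, lifts, Finset.mem_filter, Finset.mem_biUnion, Finset.mem_singleton,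
    Finset.mem_insert]
  constructor
  · rintro ⟨⟨l, rfl, h⟩, -⟩
    exact h
  · rintro (rfl | rfl) <;> exact ⟨⟨[], by simp, by simp⟩, List.isChain_singleton _⟩

lemma hsum_singleton₁ {p : ℕ → ℕ → ℝ} {N j : ℕ} (hN : 0 < N) : hsum p N j [j] = 1 := by
  have h1 : ¬ (j + N = j) := by omega
  simp [hsum, Gam_singleton, Finset.filter_insert, Finset.filter_singleton, h1, pword, hN.ne']

lemma hsum_singleton₂ {p : ℕ → ℕ → ℝ} {N j : ℕ} (hN : 0 < N) : hsum p N (j + N) [j] = 1 := by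
  have h1 : ¬ (j = j + N) := by omega
  simp [hsum, Gam_singleton, Finset.filter_insert, Finset.filter_singleton, h1, pword, hN.ne']

end Aux
section Aux2

lemma Gam_cons {p : ℕ → ℕ → ℝ} {N i j : ℕ} {t : List ℕ} :
    Gam p N (i :: j :: t) =
      ((Gam p N (j :: t)).filter (fun τ => edge p i (τ.headD 0))).image (i :: ·) ∪
      ((Gam p N (j :: t)).filter (fun τ => edge p (i + N) (τ.headD 0))).image ((i + N) :: ·) := by
  ext τ
  simp only [Finset.mem_union, Finset.mem_image, Finset.mem_filter, mem_Gam,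
    mem_lifts_cons]
  constructor
  · rintro ⟨⟨l, hl, rfl | rfl⟩, hc⟩
    · have hne : l ≠ [] := by rcases hl with ⟨l', -, rfl | rfl⟩ <;> simp
      rw [chain'_cons_ne hne] at hc
      exact Or.inl ⟨l, ⟨⟨hl, hc.2⟩, hc.1⟩, rfl⟩
    · have hne : l ≠ [] := by rcases hl with ⟨l', -, rfl | rfl⟩ <;> simp
      rw [chain'_cons_ne hne] at hc
      exact Or.inr ⟨l, ⟨⟨hl, hc.2⟩, hc.1⟩, rfl⟩
  · rintro (⟨l, ⟨⟨hl, hc⟩, he⟩, rfl⟩ | ⟨l, ⟨⟨hl, hc⟩, he⟩, rfl⟩) <;>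
    · have hne : l ≠ [] := by rcases hl with ⟨l', -, rfl | rfl⟩ <;> simp
      exact ⟨⟨l, hl, by simp⟩, (chain'_cons_ne hne).2 ⟨he, hc⟩⟩

lemma hsum_cons₁ {p : ℕ → ℕ → ℝ} {N i j : ℕ} {t : List ℕ}
    (h1 : 0 < p i j) (h2 : 0 < p i (j + N)) (hiN : i ≠ i + N) (hjN : j ≠ j + N) :
    hsum p N i (i :: j :: t) =
      p i j * hsum p N j (j :: t) + p i (j + N) * hsum p N (j + N) (j :: t) := by
  have hX : ((((Gam p N (j :: t)).filter (fun τ => edge p i (τ.headD 0))).image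
      (i :: ·)).filter (fun τ => τ.headD 0 = i)) =
      ((Gam p N (j :: t)).filter (fun τ => edge p i (τ.headD 0))).image (i :: ·) :=
    Finset.filter_true_of_mem (by
      rintro τ hτ
      obtain ⟨l, -, rfl⟩ := Finset.mem_image.1 hτ
      rfl)
  have hY : ((((Gam p N (j :: t)).filter (fun τ => edge p (i + N) (τ.headD 0))).image
      ((i + N) :: ·)).filter (fun τ => τ.headD 0 = i)) = ∅ :=
    Finset.filter_false_of_mem (by
      rintro τ hτ
      obtain ⟨l, -, rfl⟩ := Finset.mem_image.1 hτ
      simp only [List.headD_cons]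
      omega)
  have hfull : (Gam p N (j :: t)).filter (fun τ => edge p i (τ.headD 0)) =
      Gam p N (j :: t) :=
    Finset.filter_true_of_mem (by
      intro τ hτ
      rcases headD_of_mem_Gam hτ with h | h <;> rw [h]
      · exact h1
      · exact h2)
  simp only [hsum]
  rw [Gam_cons, Finset.filter_union, hX, hY, Finset.union_empty, hfull,
    Finset.sum_image (by intro x _ y _ h; simpa using h)]
  rw [← Finset.sum_filter_add_sum_filter_not (Gam p N (j :: t)) (fun τ => τ.headD 0 = j)]
  have hnotj : (Gam p N (j :: t)).filter (fun τ => ¬ τ.headD 0 = j) =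
      (Gam p N (j :: t)).filter (fun τ => τ.headD 0 = j + N) := by
    apply Finset.filter_congr
    intro τ hτ
    rcases headD_of_mem_Gam hτ with h | h <;> rw [h] <;> omega
  congr 1
  · rw [Finset.mul_sum]
    apply Finset.sum_congr rfl
    intro τ hτ
    obtain ⟨hτ', hh⟩ := Finset.mem_filter.1 hτ
    rw [pword_cons (lifts_ne_nil (by simp) (mem_Gam.1 hτ').1), hh]
  · rw [hnotj, Finset.mul_sum]
    apply Finset.sum_congr rfl
    intro τ hτ
    obtain ⟨hτ', hh⟩ := Finset.mem_filter.1 hτ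
    rw [pword_cons (lifts_ne_nil (by simp) (mem_Gam.1 hτ').1), hh]

lemma hsum_cons₂ {p : ℕ → ℕ → ℝ} {N i j : ℕ} {t : List ℕ}
    (h3 : p (i + N) j = 0) (h4 : 0 < p (i + N) (j + N)) (hiN : i ≠ i + N) (hjN : j ≠ j + N) :
    hsum p N (i + N) (i :: j :: t) = p (i + N) (j + N) * hsum p N (j + N) (j :: t) := by
  have hX : ((((Gam p N (j :: t)).filter (fun τ => edge p i (τ.headD 0))).image
      (i :: ·)).filter (fun τ => τ.headD 0 = i + N)) = ∅ :=
    Finset.filter_false_of_mem (by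
      rintro τ hτ
      obtain ⟨l, -, rfl⟩ := Finset.mem_image.1 hτ
      simp only [List.headD_cons]
      omega)
  have hY : ((((Gam p N (j :: t)).filter (fun τ => edge p (i + N) (τ.headD 0))).image
      ((i + N) :: ·)).filter (fun τ => τ.headD 0 = i + N)) =
      ((Gam p N (j :: t)).filter (fun τ => edge p (i + N) (τ.headD 0))).image ((i + N) :: ·) :=
    Finset.filter_true_of_mem (by
      rintro τ hτ
      obtain ⟨l, -, rfl⟩ := Finset.mem_image.1 hτ
      rfl)
  have hQ : (Gam p N (j :: t)).filter (fun τ => edge p (i + N) (τ.headD 0)) =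
      (Gam p N (j :: t)).filter (fun τ => τ.headD 0 = j + N) := by
    apply Finset.filter_congr
    intro τ hτ
    rcases headD_of_mem_Gam hτ with h | h <;> rw [h]
    · simp only [edge, h3]
      constructor
      · intro hlt; exact absurd hlt (lt_irrefl 0)
      · intro heq; exact absurd heq hjN
    · simp [edge, h4]
  simp only [hsum]
  rw [Gam_cons, Finset.filter_union, hX, hY, Finset.empty_union, hQ,
    Finset.sum_image (by intro x _ y _ h; simpa using h)]
  rw [Finset.mul_sum]
  apply Finset.sum_congr rfl
  intro τ hτ
  obtain ⟨hτ', hh⟩ := Finset.mem_filter.1 hτ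
  rw [pword_cons (lifts_ne_nil (by simp) (mem_Gam.1 hτ').1), hh]

lemma muJ_split {p : ℕ → ℕ → ℝ} {χ : ℕ → ℝ} {N j : ℕ} {t : List ℕ} (hjN : j ≠ j + N) :
    muJ p χ N (j :: t) =
      χ j * hsum p N j (j :: t) + χ (j + N) * hsum p N (j + N) (j :: t) := by
  rw [muJ, ← Finset.sum_filter_add_sum_filter_not (Gam p N (j :: t))
    (fun τ => τ.headD 0 = j)]
  have hnotj : (Gam p N (j :: t)).filter (fun τ => ¬ τ.headD 0 = j) =
      (Gam p N (j :: t)).filter (fun τ => τ.headD 0 = j + N) := by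
    apply Finset.filter_congr
    intro τ hτ
    rcases headD_of_mem_Gam hτ with h | h <;> rw [h] <;> omega
  congr 1
  · simp only [hsum, Finset.mul_sum]
    apply Finset.sum_congr rfl
    intro τ hτ
    rw [(Finset.mem_filter.1 hτ).2]
  · rw [hnotj]
    simp only [hsum, Finset.mul_sum]
    apply Finset.sum_congr rfl
    intro τ hτ
    rw [(Finset.mem_filter.1 hτ).2]

end Aux2
section Aux3

lemma chain_of_lift {p : ℕ → ℕ → ℝ} {N : ℕ} (hA3 : A3 p N) :
    ∀ (σ : List ℕ), (∀ x ∈ σ, x ∈ Finset.Icc 1 N) →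
      ∀ τ ∈ lifts N σ, τ.Chain' (edge p) → σ.Chain' (edge p)
  | [], _, _, _, _ => List.isChain_nil
  | [a], _, _, _, _ => List.isChain_singleton a
  | a :: b :: t, hΨ, τ, hτ, hc => by
    rcases mem_lifts_cons.1 hτ with ⟨l, hl, hcase⟩
    have hlne : l ≠ [] := lifts_ne_nil (by simp) hl
    have hbl : l.headD 0 = b ∨ l.headD 0 = b + N := by
      rcases mem_lifts_cons.1 hl with ⟨l', -, rfl | rfl⟩ <;> simp
    have key : l.Chain' (edge p) ∧ (edge p a (l.headD 0) ∨ edge p (a + N) (l.headD 0)) := by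
      rcases hcase with rfl | rfl <;> rw [chain'_cons_ne hlne] at hc
      · exact ⟨hc.2, Or.inl hc.1⟩
      · exact ⟨hc.2, Or.inr hc.1⟩
    have ha : a ∈ Finset.Icc 1 N := hΨ a (by simp)
    have hb : b ∈ Finset.Icc 1 N := hΨ b (by simp)
    have hab : edge p a b := by
      rcases hA3 a ha b hb with ⟨h1, h2, h3, h4⟩ | hpos
      · exfalso
        rcases key.2 with h | h <;> rcases hbl with h' | h' <;> rw [h'] at h <;>
          simp only [edge, h1, h2, h3, h4] at h <;> exact lt_irrefl 0 h
      · exact hpos.1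
    have htail := chain_of_lift hA3 (b :: t)
      (fun x hx => hΨ x (List.mem_cons_of_mem a hx)) l hl key.1
    exact List.isChain_cons_cons.2 ⟨hab, htail⟩

lemma sword_iff {p : ℕ → ℕ → ℝ} {N : ℕ} (hA3 : A3 p N) (σ : List ℕ) :
    isSword p N σ ↔ isH1word p N σ := by
  constructor
  · rintro ⟨⟨hne, hΨ⟩, ⟨τ, hτ⟩⟩
    have h := mem_Gam.1 hτ
    exact ⟨hne, hΨ, chain_of_lift hA3 σ hΨ τ h.1 h.2⟩
  · rintro ⟨hne, hΨ, hc⟩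
    exact ⟨⟨hne, hΨ⟩, ⟨σ, mem_Gam.2 ⟨self_mem_lifts N σ, hc⟩⟩⟩

lemma pword_nonneg {N : ℕ} (pt : ℕ → ℕ → ℝ)
    (h : ∀ i ∈ Finset.Icc 1 N, ∀ j ∈ Finset.Icc 1 N, 0 ≤ pt i j) :
    ∀ σ : List ℕ, (∀ x ∈ σ, x ∈ Finset.Icc 1 N) → 0 ≤ pword pt σ
  | [], _ => by norm_num [pword]
  | [a], _ => by norm_num [pword]
  | a :: b :: t, hΨ => by
    have hr : pword pt (a :: b :: t) = pt a b * pword pt (b :: t) := rfl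
    rw [hr]
    exact mul_nonneg (h a (hΨ a (by simp)) b (hΨ b (by simp)))
      (pword_nonneg pt h (b :: t) (fun x hx => hΨ x (List.mem_cons_of_mem a hx)))

lemma hsum_pos {p : ℕ → ℕ → ℝ} {N : ℕ} (hA3 : A3 p N) (hN0 : 0 < N) :
    ∀ (t : List ℕ) (j : ℕ), isH1word p N (j :: t) →
      0 < hsum p N j (j :: t) ∧ 0 < hsum p N (j + N) (j :: t)
  | [], j, _ => by
    rw [hsum_singleton₁ hN0, hsum_singleton₂ hN0]
    norm_num
  | l :: t, j, h => by
    obtain ⟨-, hΨ, hc⟩ := h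
    have hj : j ∈ Finset.Icc 1 N := hΨ j (by simp)
    have hl : l ∈ Finset.Icc 1 N := hΨ l (by simp)
    have hch := List.isChain_cons_cons.1 hc
    obtain ⟨h1, h2, h3, h4⟩ := (hA3 j hj l hl).resolve_left (by
      rintro ⟨h0, -, -, -⟩
      have : (0:ℝ) < p j l := hch.1
      rw [h0] at this
      exact lt_irrefl 0 this)
    have ih := hsum_pos hA3 hN0 t l
      ⟨by simp, fun x hx => hΨ x (List.mem_cons_of_mem j hx), hch.2⟩
    rw [hsum_cons₁ h1 h2 (by omega) (by omega), hsum_cons₂ h3 h4 (by omega) (by omega)]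
    exact ⟨add_pos (mul_pos h1 ih.1) (mul_pos h2 ih.2), mul_pos h4 ih.2⟩

lemma muJ_pos {p : ℕ → ℕ → ℝ} {χ : ℕ → ℝ} {N : ℕ} (hA3 : A3 p N) (hN0 : 0 < N)
    (hχpos : ∀ i ∈ Finset.Icc 1 (2 * N), 0 < χ i) :
    ∀ (σ : List ℕ), isH1word p N σ → 0 < muJ p χ N σ := by
  rintro (_ | ⟨j, t⟩) h
  · exact absurd rfl h.1
  · have hj : j ∈ Finset.Icc 1 N := h.2.1 j (by simp)
    have hj' : j ∈ Finset.Icc 1 (2 * N) := by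
      simp only [Finset.mem_Icc] at hj ⊢; omega
    have hjN : j + N ∈ Finset.Icc 1 (2 * N) := by
      simp only [Finset.mem_Icc] at hj ⊢; omega
    have hs := hsum_pos hA3 hN0 t j h
    rw [muJ_split (by omega)]
    exact add_pos (mul_pos (hχpos j hj') hs.1) (mul_pos (hχpos (j + N) hjN) hs.2)

end Aux3
lemma sum_Icc_split {N : ℕ} (f : ℕ → ℝ) :
    ∑ x ∈ Finset.Icc 1 (2 * N), f x =
      ∑ x ∈ Finset.Icc 1 N, f x + ∑ x ∈ Finset.Icc 1 N, f (x + N) := by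
  have himg : Finset.Icc (N + 1) (2 * N) = (Finset.Icc 1 N).image (· + N) := by
    ext x
    simp only [Finset.mem_Icc, Finset.mem_image]
    constructor
    · intro hx; exact ⟨x - N, by omega, by omega⟩
    · rintro ⟨y, hy, rfl⟩; omega
  have hunion : Finset.Icc 1 (2 * N) = Finset.Icc 1 N ∪ Finset.Icc (N + 1) (2 * N) := by
    ext x; simp only [Finset.mem_Icc, Finset.mem_union]; omega
  rw [hunion, Finset.sum_union (by
    rw [Finset.disjoint_left]
    intro x hx hx'
    simp only [Finset.mem_Icc] at hx hx'
    omega)]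
  congr 1
  rw [himg, Finset.sum_image (by intro x _ y _ h; exact Nat.add_right_cancel h)]
/-- **Theorem (Zhu, Theorem 1.1(2)).** Assume (A1)–(A3). Then `μ` is reducible if and only
if `p_{i,j} + p_{i,j⁺} = p_{i⁺,j⁺}` for every `(i,j) ∈ 𝒮₂`. -/
theorem stmt1
    (N q : ℕ) (hN : 2 ≤ N) (hq : 1 ≤ q) (r : ℝ) (hr : 0 < r)
    (p : ℕ → ℕ → ℝ) (χ : ℕ → ℝ)
    (hp0 : ∀ i j, 0 ≤ p i j)
    (hpsupp : ∀ i j, 0 < p i j → i ∈ Finset.Icc 1 (2 * N) ∧ j ∈ Finset.Icc 1 (2 * N))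
    (hpsum : ∀ i ∈ Finset.Icc 1 (2 * N), ∑ j ∈ Finset.Icc 1 (2 * N), p i j = 1)
    (hχpos : ∀ i ∈ Finset.Icc 1 (2 * N), 0 < χ i)
    (hχsum : ∑ i ∈ Finset.Icc 1 (2 * N), χ i = 1)
    (sr : ℕ → ℕ → ℝ)
    (T : ℕ → ℕ → EuclideanSpace ℝ (Fin q) → EuclideanSpace ℝ (Fin q))
    (J : ℕ → Set (EuclideanSpace ℝ (Fin q)))
    (hTinv : ∀ i ∈ Finset.Icc 1 N, ∀ j ∈ Finset.Icc 1 N, ∀ a b : ℕ,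
      (a = i ∨ a = i + N) → (b = j ∨ b = j + N) → 0 < p a b →
      T a b = T i j ∧ sr a b = sr i j)
    (hsim : ∀ i ∈ Finset.Icc 1 N, ∀ j ∈ Finset.Icc 1 N, isSword p N [i, j] →
      0 < sr i j ∧ sr i j < 1 ∧ ∀ x y, dist (T i j x) (T i j y) = sr i j * dist x y)
    (hJcpt : ∀ i ∈ Finset.Icc 1 N,
      IsCompact (J i) ∧ (J i).Nonempty ∧ closure (interior (J i)) = J i ∧
        Metric.diam (J i) = 1)
    (hJdisj : ∀ i ∈ Finset.Icc 1 N, ∀ j ∈ Finset.Icc 1 N, i ≠ j → Disjoint (J i) (J j))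
    (hJplus : ∀ i ∈ Finset.Icc 1 N, J (i + N) = J i)
    (hnest : ∀ i ∈ Finset.Icc 1 N, ∀ j ∈ Finset.Icc 1 N, isSword p N [i, j] →
      T i j '' J j ⊆ J i)
    (hTdisj : ∀ i ∈ Finset.Icc 1 N, ∀ j ∈ Finset.Icc 1 N, ∀ l ∈ Finset.Icc 1 N,
      isSword p N [i, j] → isSword p N [i, l] → j ≠ l →
      Disjoint (T i j '' J j) (T i l '' J l))
    (μ : Measure (EuclideanSpace ℝ (Fin q))) [IsProbabilityMeasure μ]
    (hμ : ∀ σ : List ℕ, isSword p N σ →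
      μ (Jword T J σ) = ENNReal.ofReal (muJ p χ N σ))
    (hA1 : A1 p N) (hA2 : A2 p N) (hA3 : A3 p N) :
    reducible p N T J μ ↔
      ∀ i ∈ Finset.Icc 1 N, ∀ j ∈ Finset.Icc 1 N, isSword p N [i, j] →
        p i j + p i (j + N) = p (i + N) (j + N) := by
  have hN0 : 0 < N := by omega
  -- shared helpers
  have hχ2 : ∀ k ∈ Finset.Icc 1 N, 0 < χ k ∧ 0 < χ (k + N) := by
    intro k hk
    constructor
    · exact hχpos k (by simp only [Finset.mem_Icc] at hk ⊢; omega)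
    · exact hχpos (k + N) (by simp only [Finset.mem_Icc] at hk ⊢; omega)
  have RS1 : ∀ k ∈ Finset.Icc 1 N, ∑ l ∈ Finset.Icc 1 N, (p k l + p k (l + N)) = 1 := by
    intro k hk
    have hk2 : k ∈ Finset.Icc 1 (2 * N) := by simp only [Finset.mem_Icc] at hk ⊢; omega
    have h := hpsum k hk2
    rw [sum_Icc_split (p k)] at h
    rw [Finset.sum_add_distrib]
    exact h
  have RS2 : ∀ k ∈ Finset.Icc 1 N, ∑ l ∈ Finset.Icc 1 N, p (k + N) (l + N) = 1 := by
    intro k hk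
    have hk2 : k + N ∈ Finset.Icc 1 (2 * N) := by simp only [Finset.mem_Icc] at hk ⊢; omega
    have h := hpsum (k + N) hk2
    rw [sum_Icc_split (p (k + N))] at h
    have h0 : ∑ l ∈ Finset.Icc 1 N, p (k + N) l = 0 :=
      Finset.sum_eq_zero (fun l hl => hA1.2.2 k hk l hl)
    rw [h0, zero_add] at h
    exact h
  have hA3pos : ∀ i ∈ Finset.Icc 1 N, ∀ j ∈ Finset.Icc 1 N, 0 < p i j →
      0 < p i j ∧ 0 < p i (j + N) ∧ p (i + N) j = 0 ∧ 0 < p (i + N) (j + N) := by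
    intro i hi j hj hp
    refine (hA3 i hi j hj).resolve_left ?_
    rintro ⟨h0, -, -, -⟩
    rw [h0] at hp; exact lt_irrefl 0 hp
  have hH1single : ∀ j ∈ Finset.Icc 1 N, isH1word p N [j] := by
    intro j hj
    refine ⟨by simp, ?_, List.isChain_singleton j⟩
    intro x hx
    simp only [List.mem_singleton] at hx
    subst hx; exact hj
  have hH1cons : ∀ i ∈ Finset.Icc 1 N, ∀ j t, 0 < p i j → isH1word p N (j :: t) →
      isH1word p N (i :: j :: t) := by
    intro i hi j t hp h
    refine ⟨by simp, ?_, List.isChain_cons_cons.2 ⟨hp, h.2.2⟩⟩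
    intro x hx
    rcases List.mem_cons.1 hx with rfl | hx'
    · exact hi
    · exact h.2.1 x hx'
  constructor
  · -- forward direction
    rintro ⟨pt, χt, hpt0, hptsum, hχt0, hχtsum, hcyl⟩
    have hmuJ : ∀ σ, isH1word p N σ → muJ p χ N σ = χt (σ.headD 0) * pword pt σ := by
      intro σ hσ
      have hs : isSword p N σ := (sword_iff hA3 σ).2 hσ
      have h2 := hcyl σ hs
      rw [hμ σ hs] at h2
      have hhead : σ.headD 0 ∈ Finset.Icc 1 N := by
        cases σ with
        | nil => exact absurd rfl hσ.1
        | cons a t => exact hσ.2.1 a (by simp)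
      have hmpos := muJ_pos hA3 hN0 hχpos σ hσ
      have hnn : 0 ≤ χt (σ.headD 0) * pword pt σ :=
        mul_nonneg (hχt0 _ hhead).le (pword_nonneg pt hpt0 σ hσ.2.1)
      exact (ENNReal.ofReal_eq_ofReal_iff hmpos.le hnn).1 h2
    have hχt : ∀ j ∈ Finset.Icc 1 N, χt j = χ j + χ (j + N) := by
      intro j hj
      have h := hmuJ [j] (hH1single j hj)
      rw [muJ_split (by omega), hsum_singleton₁ hN0, hsum_singleton₂ hN0] at h
      have hpw : pword pt [j] = 1 := rfl
      rw [hpw] at h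
      simp only [List.headD_cons] at h
      linarith [h]
    -- the dichotomy
    have dich : ∀ i ∈ Finset.Icc 1 N, ∀ j ∈ Finset.Icc 1 N, 0 < p i j →
        (∀ t, isH1word p N (j :: t) →
          hsum p N j (j :: t) = hsum p N (j + N) (j :: t)) ∨
        χ i * p i j * χ (j + N) =
          χ j * (χ i * p i (j + N) + χ (i + N) * p (i + N) (j + N)) := by
      intro i hi j hj hpij
      obtain ⟨h1, h2, h3, h4⟩ := hA3pos i hi j hj hpij
      have key : ∀ t, isH1word p N (j :: t) →
          (χt j * (χ i * p i j) - χt i * pt i j * χ j) * hsum p N j (j :: t) =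
          (χt i * pt i j * χ (j + N) -
            χt j * (χ i * p i (j + N) + χ (i + N) * p (i + N) (j + N))) *
            hsum p N (j + N) (j :: t) := by
        intro t ht
        have hword := hH1cons i hi j t hpij ht
        have e1 := hmuJ (i :: j :: t) hword
        have e2 := hmuJ (j :: t) ht
        rw [muJ_split (by omega), hsum_cons₁ h1 h2 (by omega) (by omega),
          hsum_cons₂ h3 h4 (by omega) (by omega)] at e1
        rw [muJ_split (by omega)] at e2
        have e3 : pword pt (i :: j :: t) = pt i j * pword pt (j :: t) := rfl
        rw [e3] at e1
        simp only [List.headD_cons] at e1 e2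
        linear_combination χt j * e1 - χt i * pt i j * e2
      have hAB := key [] (hH1single j hj)
      rw [hsum_singleton₁ hN0, hsum_singleton₂ hN0, mul_one, mul_one] at hAB
      by_cases hA0 : χt j * (χ i * p i j) - χt i * pt i j * χ j = 0
      · right
        have hB0 : χt i * pt i j * χ (j + N) -
            χt j * (χ i * p i (j + N) + χ (i + N) * p (i + N) (j + N)) = 0 := by
          rw [← hAB]; exact hA0
        have hχtj := hχt j hj
        have hχj := hχ2 j hj
        have hχtjpos : 0 < χt j := by rw [hχtj]; linarith [hχj.1, hχj.2]
        have hcomb : χt j * (χ i * p i j * χ (j + N)) =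
            χt j * (χ j * (χ i * p i (j + N) + χ (i + N) * p (i + N) (j + N))) := by
          linear_combination χ (j + N) * hA0 + χ j * hB0
        exact mul_left_cancel₀ (ne_of_gt hχtjpos) hcomb
      · left
        intro t ht
        have h := key t ht
        rw [← hAB] at h
        exact mul_left_cancel₀ hA0 h
    -- F = G propagates along edges
    have FGprop : ∀ j ∈ Finset.Icc 1 N, ∀ l ∈ Finset.Icc 1 N, 0 < p j l →
        (∀ t, isH1word p N (j :: t) →
          hsum p N j (j :: t) = hsum p N (j + N) (j :: t)) →
        (p j l + p j (l + N) = p (j + N) (l + N)) ∧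
        (∀ t, isH1word p N (l :: t) →
          hsum p N l (l :: t) = hsum p N (l + N) (l :: t)) := by
      intro j hj l hl hpjl hFG
      obtain ⟨h1, h2, h3, h4⟩ := hA3pos j hj l hl hpjl
      have hd : p j l + p j (l + N) = p (j + N) (l + N) := by
        have h := hFG [l] (hH1cons j hj l [] hpjl (hH1single l hl))
        rw [hsum_cons₁ h1 h2 (by omega) (by omega), hsum_cons₂ h3 h4 (by omega) (by omega),
          hsum_singleton₁ hN0, hsum_singleton₂ hN0] at h
        linarith [h]
      refine ⟨hd, ?_⟩
      intro t ht
      have h := hFG (l :: t) (hH1cons j hj l t hpjl ht)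
      rw [hsum_cons₁ h1 h2 (by omega) (by omega),
        hsum_cons₂ h3 h4 (by omega) (by omega)] at h
      have h' : p j l * hsum p N l (l :: t) = p j l * hsum p N (l + N) (l :: t) := by
        linear_combination h - hsum p N (l + N) (l :: t) * hd
      exact mul_left_cancel₀ (ne_of_gt h1) h'
    have FGchain : ∀ (c : List ℕ), (∀ x ∈ c, x ∈ Finset.Icc 1 N) →
        ∀ j0 ∈ Finset.Icc 1 N, ∀ l ∈ Finset.Icc 1 N,
        List.Chain (edge p) j0 (c ++ [l]) →
        (∀ t, isH1word p N (j0 :: t) →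
          hsum p N j0 (j0 :: t) = hsum p N (j0 + N) (j0 :: t)) →
        (∀ t, isH1word p N (l :: t) →
          hsum p N l (l :: t) = hsum p N (l + N) (l :: t)) := by
      intro c
      induction c with
      | nil =>
        intro _ j0 hj0 l hl hch hFG
        rw [List.nil_append] at hch
        change List.IsChain _ (_ :: _) at hch
        rw [List.chain_cons] at hch
        exact (FGprop j0 hj0 l hl hch.1 hFG).2
      | cons a c ih =>
        intro hc j0 hj0 l hl hch hFG
        have ha := hc a (by simp)
        rw [List.cons_append] at hch
        change List.IsChain _ (_ :: _) at hch
        rw [List.chain_cons] at hch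
        exact ih (fun x hx => hc x (by simp [hx])) a ha l hl hch.2
          (FGprop j0 hj0 a ha hch.1 hFG).2
    intro i hi j hj hsij
    have hpij : 0 < p i j := by
      have h := ((sword_iff hA3 [i, j]).1 hsij).2.2
      have h2 : edge p i j := List.isChain_pair.mp h
      exact h2
    by_cases hex : ∃ j0 ∈ Finset.Icc 1 N, ∀ t, isH1word p N (j0 :: t) →
        hsum p N j0 (j0 :: t) = hsum p N (j0 + N) (j0 :: t)
    · obtain ⟨j0, hj0, hFG⟩ := hex
      obtain ⟨c, hc1, hc2⟩ := hA1.1 j0 hj0 i hi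
      exact (FGprop i hi j hj hpij (FGchain c hc1 j0 hj0 i hi hc2 hFG)).1
    · exfalso
      push_neg at hex
      have hvan : ∀ k ∈ Finset.Icc 1 N, ∀ l ∈ Finset.Icc 1 N, 0 < p k l →
          χ k * p k l * χ (l + N) =
            χ l * (χ k * p k (l + N) + χ (k + N) * p (k + N) (l + N)) := by
        intro k hk l hl hpkl
        rcases dich k hk l hl hpkl with h | h
        · obtain ⟨t, ht, hne⟩ := hex l hl
          exact absurd (h t ht) hne
        · exact h
      have hterm : ∀ k ∈ Finset.Icc 1 N, ∀ l ∈ Finset.Icc 1 N,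
          p k l * ((χ l + χ (l + N)) / χ l) =
            (p k l + p k (l + N)) + (χ (k + N) / χ k) * p (k + N) (l + N) := by
        intro k hk l hl
        have hχk := hχ2 k hk
        have hχl := hχ2 l hl
        rcases hA3 k hk l hl with ⟨h1, h2, h3, h4⟩ | ⟨h1, h2, h3, h4⟩
        · rw [h1, h2, h4]; ring
        · have hv' := hvan k hk l hl h1
          have hk0 : χ k ≠ 0 := ne_of_gt hχk.1
          have hl0 : χ l ≠ 0 := ne_of_gt hχl.1
          field_simp
          linear_combination hv'
      have hrow : ∀ k ∈ Finset.Icc 1 N,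
          ∑ l ∈ Finset.Icc 1 N, p k l * ((χ l + χ (l + N)) / χ l) =
            (χ k + χ (k + N)) / χ k := by
        intro k hk
        have hχk := hχ2 k hk
        have hstep : ∑ l ∈ Finset.Icc 1 N, p k l * ((χ l + χ (l + N)) / χ l) =
            ∑ l ∈ Finset.Icc 1 N,
              ((p k l + p k (l + N)) + (χ (k + N) / χ k) * p (k + N) (l + N)) :=
          Finset.sum_congr rfl (fun l hl => hterm k hk l hl)
        have hk0 : χ k ≠ 0 := ne_of_gt hχk.1
        rw [hstep, Finset.sum_add_distrib, RS1 k hk, ← Finset.mul_sum, RS2 k hk, mul_one]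
        field_simp
      obtain ⟨m, hm, hmax⟩ := Finset.exists_max_image (Finset.Icc 1 N)
        (fun k => (χ k + χ (k + N)) / χ k)
        ⟨1, by simp only [Finset.mem_Icc]; omega⟩
      have hχm := hχ2 m hm
      have hex1 : ∃ l ∈ Finset.Icc 1 N, 0 < p m l := by
        by_contra hcon
        push_neg at hcon
        have hz : ∑ l ∈ Finset.Icc 1 N, (p m l + p m (l + N)) = 0 :=
          Finset.sum_eq_zero (fun l hl => by
            rcases hA3 m hm l hl with ⟨h1, h2, -, -⟩ | ⟨h1, -, -, -⟩
            · rw [h1, h2]; ring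
            · exact absurd h1 (not_lt.2 (hcon l hl)))
        rw [RS1 m hm] at hz
        norm_num at hz
      obtain ⟨l0, hl0, hpml0⟩ := hex1
      obtain ⟨-, hpml0', -, -⟩ := hA3pos m hm l0 hl0 hpml0
      have hsum_lt : ∑ l ∈ Finset.Icc 1 N, p m l < 1 := by
        have h1 := RS1 m hm
        rw [Finset.sum_add_distrib] at h1
        have h3 : p m (l0 + N) ≤ ∑ l ∈ Finset.Icc 1 N, p m (l + N) :=
          Finset.single_le_sum (fun l _ => hp0 m (l + N)) hl0
        linarith
      have hle : (χ m + χ (m + N)) / χ m ≤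
          ((χ m + χ (m + N)) / χ m) * ∑ l ∈ Finset.Icc 1 N, p m l := by
        conv_lhs => rw [← hrow m hm]
        rw [Finset.mul_sum]
        apply Finset.sum_le_sum
        intro l hl
        calc p m l * ((χ l + χ (l + N)) / χ l)
            ≤ p m l * ((χ m + χ (m + N)) / χ m) :=
              mul_le_mul_of_nonneg_left (hmax l hl) (hp0 m l)
          _ = ((χ m + χ (m + N)) / χ m) * p m l := mul_comm _ _
      have hvmpos : (0:ℝ) < (χ m + χ (m + N)) / χ m :=
        div_pos (by linarith [hχm.1, hχm.2]) hχm.1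
      have hlt : ((χ m + χ (m + N)) / χ m) * ∑ l ∈ Finset.Icc 1 N, p m l <
          ((χ m + χ (m + N)) / χ m) * 1 := mul_lt_mul_of_pos_left hsum_lt hvmpos
      rw [mul_one] at hlt
      linarith [hle, hlt]
  · -- converse direction
    intro hcond
    refine ⟨fun a b => p (a + N) (b + N), fun i => χ i + χ (i + N), ?_, ?_, ?_, ?_, ?_⟩
    · intro i _ j _; exact hp0 _ _
    · intro i hi; exact RS2 i hi
    · intro i hi
      have h := hχ2 i hi
      show 0 < χ i + χ (i + N)
      linarith [h.1, h.2]
    · show ∑ i ∈ Finset.Icc 1 N, (χ i + χ (i + N)) = 1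
      rw [Finset.sum_add_distrib, ← sum_Icc_split χ]
      exact hχsum
    · intro σ hσ
      obtain ⟨hne, hΨ, hc⟩ := (sword_iff hA3 σ).1 hσ
      rw [hμ σ hσ]
      congr 1
      have claim : ∀ (t : List ℕ) (j : ℕ), isH1word p N (j :: t) →
          hsum p N j (j :: t) = pword (fun a b => p (a + N) (b + N)) (j :: t) ∧
          hsum p N (j + N) (j :: t) = pword (fun a b => p (a + N) (b + N)) (j :: t) := by
        intro t
        induction t with
        | nil =>
          intro j _
          rw [hsum_singleton₁ hN0, hsum_singleton₂ hN0]
          exact ⟨rfl, rfl⟩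
        | cons l t ih =>
          intro j hj'
          obtain ⟨-, hΨ', hc'⟩ := hj'
          have hjm : j ∈ Finset.Icc 1 N := hΨ' j (by simp)
          have hlm : l ∈ Finset.Icc 1 N := hΨ' l (by simp)
          have hch := List.isChain_cons_cons.1 hc'
          have hpjl : 0 < p j l := hch.1
          obtain ⟨h1, h2, h3, h4⟩ := hA3pos j hjm l hlm hpjl
          have ih' := ih l ⟨by simp, fun x hx => hΨ' x (List.mem_cons_of_mem j hx), hch.2⟩
          have hd := hcond j hjm l hlm ((sword_iff hA3 [j, l]).2
            ⟨by simp, by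
              intro x hx
              simp only [List.mem_cons, List.mem_singleton, List.not_mem_nil, or_false] at hx
              rcases hx with rfl | rfl
              exacts [hjm, hlm],
              List.isChain_pair.2 hpjl⟩)
          have hpw : pword (fun a b => p (a + N) (b + N)) (j :: l :: t) =
              p (j + N) (l + N) * pword (fun a b => p (a + N) (b + N)) (l :: t) := rfl
          constructor
          · rw [hsum_cons₁ h1 h2 (by omega) (by omega), ih'.1, ih'.2, hpw]
            linear_combination pword (fun a b => p (a + N) (b + N)) (l :: t) * hd
          · rw [hsum_cons₂ h3 h4 (by omega) (by omega), ih'.2, hpw]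
      cases σ with
      | nil => exact absurd rfl hne
      | cons j t =>
        have hcl := claim t j ⟨hne, hΨ, hc⟩
        rw [muJ_split (show j ≠ j + N by omega), hcl.1, hcl.2]
        simp only [List.headD_cons]
        ring

end MTM

end
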